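/- Let X₁, X₂, X₃ ∈ A⁺. If ρ(X₁X₂X₃) = ρ(X₁X₂)ρ(X₃) (concatenation in B*), then ρ(X₂X₃) = ρ(X₂)ρ(X₃). -/

import Mathlib

/-- A rewriting system: every rule has nonempty left- and right-hand sides. -/
def IsRWS {α : Type*} (R : Set (List α × List α)) : Prop :=
  ∀ r ∈ R, r.1 ≠ [] ∧ r.2 ≠ []

/-- One-step reduction `W₁ →_R W₂`. -/
def Step {α : Type*} (R : Set (List α × List α)) (W₁ W₂ : List α) : Prop :=
  ∃ Z₁ Z₂ X Y, (X, Y) ∈ R ∧ W₁ = Z₁ ++ X ++ Z₂ ∧ W₂ = Z₁ ++ Y ++ Z₂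

/-- `→*_R`: the reflexive-transitive closure of one-step reduction. -/
def Steps {α : Type*} (R : Set (List α × List α)) : List α → List α → Prop :=
  Relation.ReflTransGen (Step R)

/-- Noetherian: no infinite reduction sequence. -/
def Noetherian {α : Type*} (R : Set (List α × List α)) : Prop :=
  ¬ ∃ g : ℕ → List α, ∀ i, Step R (g i) (g (i + 1))

/-- Confluence. -/
def Confluent {α : Type*} (R : Set (List α × List α)) : Prop :=
  ∀ U V W, Steps R U V → Steps R U W → ∃ X, Steps R V X ∧ Steps R W X

/-- Complete rewriting system: Noetherian and confluent. -/
def CompleteRWS {α : Type*} (R : Set (List α × List α)) : Prop :=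
  Noetherian R ∧ Confluent R

/-- `Irr R W`: `W ∈ A⁺` has no factor which is the left-hand side of a rule. -/
def Irr {α : Type*} (R : Set (List α × List α)) (W : List α) : Prop :=
  W ≠ [] ∧ ¬ ∃ Z₁ X Z₂, (∃ Y, (X, Y) ∈ R) ∧ W = Z₁ ++ X ++ Z₂

/-- `Presents R f`: the map sending a nonempty word `u` over `α` to `f u` exhibits the
semigroup `S` as the semigroup presented by `[α; R]`, i.e. the semigroup `A⁺/↔*_R`:
`f` restricted to nonempty words is a surjective semigroup homomorphism whose kernel
is the congruence `↔*_R` generated by `R` (the value of `f` on the empty word is irrelevant). -/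
def Presents {α S : Type*} [Semigroup S] (R : Set (List α × List α)) (f : List α → S) : Prop :=
  (∀ u v : List α, u ≠ [] → v ≠ [] → f (u ++ v) = f u * f v) ∧
  (∀ x : S, ∃ u : List α, u ≠ [] ∧ f u = x) ∧
  (∀ u v : List α, u ≠ [] → v ≠ [] → (f u = f v ↔ Relation.EqvGen (Step R) u v))

/-- `S` has a finite complete rewriting system. -/
def HasFCRS (S : Type*) [Semigroup S] : Prop :=
  ∃ (α : Type) (R : Set (List α × List α)) (f : List α → S),
    Finite α ∧ R.Finite ∧ IsRWS R ∧ CompleteRWS R ∧ Presents R f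

/-! ### The construction of Section 3: adjoining a letter `s` with `φ(s) = W₀`.
The alphabet `B = A ∪ {s}` is modelled as `α ⊕ Unit`, with `Sum.inl a` the letter
`a ∈ A` and `Sum.inr ()` the new letter `s`. -/

/-- The homomorphism `φ : B* → A*` with `φ(a) = a` for `a ∈ A` and `φ(s) = W₀`. -/
def phiS {α : Type*} (W₀ : List α) (l : List (α ⊕ Unit)) : List α :=
  l.flatMap (Sum.elim (fun a => [a]) (fun _ => W₀))

open scoped Classical in
/-- The function `ρ : A* → B*`: `ρ(ε) = ε`; if `W = X₁W₀` ends with `W₀` then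
`ρ(W) = ρ(X₁)s`; otherwise `W = X₂a` with `a ∈ A` and `ρ(W) = ρ(X₂)a`. -/
noncomputable def rhoS {α : Type*} (W₀ : List α) (W : List α) : List (α ⊕ Unit) :=
  if hW : W = [] then []
  else if h : W₀ ≠ [] ∧ W₀ <:+ W then
    rhoS W₀ (W.take (W.length - W₀.length)) ++ [Sum.inr ()]
  else
    rhoS W₀ W.dropLast ++ [Sum.inl (W.getLast hW)]
termination_by W.length
decreasing_by
  · have h1 : W₀.length ≤ W.length := h.2.length_le
    have h2 : 0 < W₀.length := List.length_pos_iff.mpr h.1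
    simp only [List.length_take]
    omega
  · have h3 : 0 < W.length := List.length_pos_iff.mpr hW
    simp only [List.length_dropLast]
    omega

/-- Rules of the form (C1): `ρ(X) → ρ(Y)` for each rule `X → Y` of `R`. -/
def C1 {α : Type*} (R : Set (List α × List α)) (W₀ : List α) :
    Set (List (α ⊕ Unit) × List (α ⊕ Unit)) :=
  {p | ∃ X Y : List α, (X, Y) ∈ R ∧ p = (rhoS W₀ X, rhoS W₀ Y)}

/-- The rule (C2): `W₀ → s`. -/
def C2 {α : Type*} (W₀ : List α) : Set (List (α ⊕ Unit) × List (α ⊕ Unit)) :=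
  {p | p = (W₀.map Sum.inl, [Sum.inr ()])}

/-- Rules of the form (C3): for each rule `X₁X₂ → Y₁` of `R` with `W₀ = Z₁X₁`
(`X₁, Y₁ ∈ A⁺`, `X₂, Z₁ ∈ A*`), the rule `ρ(Z₁X₁X₂) → ρ(Y₁')` where
`Z₁X₁X₂ →*_R Y₁' ∈ Irr(R)`. -/
def C3 {α : Type*} (R : Set (List α × List α)) (W₀ : List α) :
    Set (List (α ⊕ Unit) × List (α ⊕ Unit)) :=
  {p | ∃ X₁ X₂ Y₁ Z₁ Y₁' : List α, X₁ ≠ [] ∧ Y₁ ≠ [] ∧ (X₁ ++ X₂, Y₁) ∈ R ∧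
    W₀ = Z₁ ++ X₁ ∧ Steps R (Z₁ ++ X₁ ++ X₂) Y₁' ∧ Irr R Y₁' ∧
    p = (rhoS W₀ (Z₁ ++ X₁ ++ X₂), rhoS W₀ Y₁')}

/-- Rules of the form (C4): for each rule `X₂X₁ → Y₁` of `R` with `W₀ = X₁Z₁`
(`X₁, Y₁ ∈ A⁺`, `X₂, Z₁ ∈ A*`), the rule `ρ(X₂X₁Z₁) → ρ(Y₁')` where
`X₂X₁Z₁ →*_R Y₁' ∈ Irr(R)`. -/
def C4 {α : Type*} (R : Set (List α × List α)) (W₀ : List α) :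
    Set (List (α ⊕ Unit) × List (α ⊕ Unit)) :=
  {p | ∃ X₁ X₂ Y₁ Z₁ Y₁' : List α, X₁ ≠ [] ∧ Y₁ ≠ [] ∧ (X₂ ++ X₁, Y₁) ∈ R ∧
    W₀ = X₁ ++ Z₁ ∧ Steps R (X₂ ++ X₁ ++ Z₁) Y₁' ∧ Irr R Y₁' ∧
    p = (rhoS W₀ (X₂ ++ X₁ ++ Z₁), rhoS W₀ Y₁')}

/-- Rules of the form (C5): for each rule `X₂X₃X₄ → Y₁` of `R` with `W₀ = X₄X₅ = X₁X₂`
(`X₂, X₄, Y₁ ∈ A⁺`, `X₁, X₃, X₅ ∈ A*`), the rule `ρ(X₁X₂X₃X₄X₅) → ρ(Y₁')` where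
`X₁X₂X₃X₄X₅ →*_R Y₁' ∈ Irr(R)`. -/
def C5 {α : Type*} (R : Set (List α × List α)) (W₀ : List α) :
    Set (List (α ⊕ Unit) × List (α ⊕ Unit)) :=
  {p | ∃ X₁ X₂ X₃ X₄ X₅ Y₁ Y₁' : List α, X₂ ≠ [] ∧ X₄ ≠ [] ∧ Y₁ ≠ [] ∧
    (X₂ ++ X₃ ++ X₄, Y₁) ∈ R ∧ W₀ = X₄ ++ X₅ ∧ W₀ = X₁ ++ X₂ ∧
    Steps R (X₁ ++ X₂ ++ X₃ ++ X₄ ++ X₅) Y₁' ∧ Irr R Y₁' ∧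
    p = (rhoS W₀ (X₁ ++ X₂ ++ X₃ ++ X₄ ++ X₅), rhoS W₀ Y₁')}

/-- Rules of the form (C6): `sX₃ → X₁s` whenever `W₀ = X₁X₂ = X₂X₃` with
`X₁, X₂, X₃ ∈ A⁺`. -/
def C6 {α : Type*} (W₀ : List α) : Set (List (α ⊕ Unit) × List (α ⊕ Unit)) :=
  {p | ∃ X₁ X₂ X₃ : List α, X₁ ≠ [] ∧ X₂ ≠ [] ∧ X₃ ≠ [] ∧
    W₀ = X₁ ++ X₂ ∧ W₀ = X₂ ++ X₃ ∧
    p = (Sum.inr () :: X₃.map Sum.inl, X₁.map Sum.inl ++ [Sum.inr ()])}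

/-- The rewriting system `R_S` over `B = A ∪ {s}`. -/
def RS {α : Type*} (R : Set (List α × List α)) (W₀ : List α) :
    Set (List (α ⊕ Unit) × List (α ⊕ Unit)) :=
  C1 R W₀ ∪ C2 W₀ ∪ C3 R W₀ ∪ C4 R W₀ ∪ C5 R W₀ ∪ C6 W₀


section Aux
variable {α : Type*}

lemma rhoS_eq_s' (W₀ W : List α) (hW : W ≠ []) (h : W₀ ≠ [] ∧ W₀ <:+ W) :
    rhoS W₀ W = rhoS W₀ (W.take (W.length - W₀.length)) ++ [Sum.inr ()] := by
  rw [rhoS]; rw [dif_neg hW, dif_pos h]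

lemma rhoS_eq_a' (W₀ W : List α) (hW : W ≠ []) (h : ¬(W₀ ≠ [] ∧ W₀ <:+ W)) :
    rhoS W₀ W = rhoS W₀ W.dropLast ++ [Sum.inl (W.getLast hW)] := by
  rw [rhoS]; rw [dif_neg hW, dif_neg h]

lemma rhoS_nil' (W₀ : List α) : rhoS W₀ ([] : List α) = [] := by
  rw [rhoS]; simp

lemma take_append_cancel (W₀ : List α) (X : List α) :
    (X ++ W₀).take ((X ++ W₀).length - W₀.length) = X := by
  rw [List.length_append, Nat.add_sub_cancel, List.take_left]

lemma rho_split_suffix (W₀ : List α) :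
    ∀ n (V U U' : List α), V.length ≤ n → U <:+ U' →
    rhoS W₀ (U' ++ V) = rhoS W₀ U' ++ rhoS W₀ V →
    rhoS W₀ (U ++ V) = rhoS W₀ U ++ rhoS W₀ V := by
  intro n
  induction n with
  | zero =>
    intro V U U' hlen _ _
    have hV : V = [] := List.length_eq_zero_iff.mp (Nat.le_zero.mp hlen)
    subst hV; simp [rhoS_nil']
  | succ n ih =>
    intro V U U' hlen hsuf h
    rcases eq_or_ne V [] with rfl | hV
    · simp [rhoS_nil']
    by_cases hc : W₀ ≠ [] ∧ W₀ <:+ V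
    · obtain ⟨V₁, rfl⟩ := hc.2
      have hW₀ : W₀ ≠ [] := hc.1
      have e3 : rhoS W₀ (V₁ ++ W₀) = rhoS W₀ V₁ ++ [Sum.inr ()] := by
        rw [rhoS_eq_s' _ _ hV ⟨hW₀, ⟨V₁, rfl⟩⟩, take_append_cancel]
      have e1 : ∀ X : List α, rhoS W₀ (X ++ (V₁ ++ W₀)) =
          rhoS W₀ (X ++ V₁) ++ [Sum.inr ()] := by
        intro X
        rw [← List.append_assoc,
          rhoS_eq_s' _ _ (by simp [hW₀]) ⟨hW₀, ⟨X ++ V₁, rfl⟩⟩, take_append_cancel]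
      rw [e1, e3, ← List.append_assoc] at h
      rw [List.append_left_inj] at h
      have hlen' : V₁.length ≤ n := by
        have h1 : 0 < W₀.length := List.length_pos_iff.mpr hW₀
        have h2 := hlen
        rw [List.length_append] at h2
        omega
      have h' := ih V₁ U U' hlen' hsuf h
      rw [e1, e3, h', List.append_assoc]
    · -- V does not end with W₀
      have hU'V : U' ++ V ≠ [] := by simp [hV]
      have hUV : U ++ V ≠ [] := by simp [hV]
      have eV : rhoS W₀ V = rhoS W₀ V.dropLast ++ [Sum.inl (V.getLast hV)] :=
        rhoS_eq_a' _ _ hV hc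
      have hcU' : ¬(W₀ ≠ [] ∧ W₀ <:+ U' ++ V) := by
        intro hcu
        rw [rhoS_eq_s' _ _ hU'V hcu, eV, ← List.append_assoc] at h
        have := congrArg List.getLast? h
        simp [List.getLast?_concat] at this
      have hcU : ¬(W₀ ≠ [] ∧ W₀ <:+ U ++ V) := by
        rintro ⟨h1, h2⟩
        obtain ⟨t, rfl⟩ := hsuf
        exact hcU' ⟨h1, h2.trans ⟨t, (List.append_assoc t U V).symm⟩⟩
      have eA : ∀ (X : List α) (hX : X ++ V ≠ []) (hcX : ¬(W₀ ≠ [] ∧ W₀ <:+ X ++ V)),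
          rhoS W₀ (X ++ V) = rhoS W₀ (X ++ V.dropLast) ++ [Sum.inl (V.getLast hV)] := by
        intro X hX hcX
        rw [rhoS_eq_a' _ _ hX hcX, List.dropLast_append_of_ne_nil hV,
          List.getLast_append_of_right_ne_nil _ _ hV]
      rw [eA U' hU'V hcU', eV, ← List.append_assoc, List.append_left_inj] at h
      have hlen' : V.dropLast.length ≤ n := by
        have h1 : 0 < V.length := List.length_pos_iff.mpr hV
        rw [List.length_dropLast]; omega
      have h' := ih V.dropLast U U' hlen' hsuf h
      rw [eA U hUV hcU, eV, h', List.append_assoc]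

end Aux

/-- **Lemma 3.1.** If `ρ(X₁X₂X₃) = ρ(X₁X₂)ρ(X₃)` then `ρ(X₂X₃) = ρ(X₂)ρ(X₃)`. -/
theorem lemma_3_1 {α : Type*} (R : Set (List α × List α))
    (hαfin : Finite α) (hRfin : R.Finite) (hRWS : IsRWS R) (hcomp : CompleteRWS R)
    (W₀ : List α) (hW₀len : 1 < W₀.length) (hW₀irr : Irr R W₀)
    (X₁ X₂ X₃ : List α) (h₁ : X₁ ≠ []) (h₂ : X₂ ≠ []) (h₃ : X₃ ≠ [])
    (h : rhoS W₀ (X₁ ++ X₂ ++ X₃) = rhoS W₀ (X₁ ++ X₂) ++ rhoS W₀ X₃) :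
    rhoS W₀ (X₂ ++ X₃) = rhoS W₀ X₂ ++ rhoS W₀ X₃ := by
  exact rho_split_suffix W₀ X₃.length X₃ X₂ (X₁ ++ X₂) le_rfl ⟨X₁, rfl⟩ h
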